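/- Let f(x, y) = ln(1 + x²/y) for x ∈ ℝ, y > 0. Then for any fixed point (x₀, y₀) with y₀ > 0, and all (x, y) with y > 0: f(x, y) ≥ f(x₀, y₀) - x₀²/y₀ + 2·x₀·x/y₀ - (x₀²/y₀)·(y + x²)/(y₀ + x₀²). -/
import Mathlib


theorem stmt_2 (x₀ y₀ : ℝ) (hy₀ : 0 < y₀) (x y : ℝ) (hy : 0 < y) :
    Real.log (1 + x ^ 2 / y) ≥
      Real.log (1 + x₀ ^ 2 / y₀) - x₀ ^ 2 / y₀ + 2 * x₀ * x / y₀ -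
        (x₀ ^ 2 / y₀) * ((y + x ^ 2) / (y₀ + x₀ ^ 2)) := by
  have hA : 0 < y + x ^ 2 := by positivity
  have hB : 0 < y₀ + x₀ ^ 2 := by positivity
  have hu : 0 < 1 + x ^ 2 / y := by positivity
  have hu0 : 0 < 1 + x₀ ^ 2 / y₀ := by positivity
  have hrat : 0 < (1 + x₀ ^ 2 / y₀) / (1 + x ^ 2 / y) := by positivity
  have hlog := Real.log_le_sub_one_of_pos hrat
  rw [Real.log_div (ne_of_gt hu0) (ne_of_gt hu)] at hlog
  have h1 : (1 + x₀ ^ 2 / y₀) / (1 + x ^ 2 / y) =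
      ((y₀ + x₀ ^ 2) * y) / (y₀ * (y + x ^ 2)) := by
    field_simp
  have key : -(x₀ ^ 2 / y₀) + 2 * x₀ * x / y₀ -
      (x₀ ^ 2 / y₀) * ((y + x ^ 2) / (y₀ + x₀ ^ 2)) ≤
      1 - (1 + x₀ ^ 2 / y₀) / (1 + x ^ 2 / y) := by
    rw [h1, ← sub_nonneg]
    have heq : 1 - (y₀ + x₀ ^ 2) * y / (y₀ * (y + x ^ 2)) -
        (-(x₀ ^ 2 / y₀) + 2 * x₀ * x / y₀ -
          (x₀ ^ 2 / y₀) * ((y + x ^ 2) / (y₀ + x₀ ^ 2))) =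
        (x * (y₀ + x₀ ^ 2) - x₀ * (y + x ^ 2)) ^ 2 /
          (y₀ * (y + x ^ 2) * (y₀ + x₀ ^ 2)) := by
      field_simp; ring
    rw [heq]; positivity
  linarith [key, hlog]
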